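/- Let v_u be the 1-periodic solution of v_u'(t) + g(u, v_u(t)) = f(t), v_u(n) = v_u(n+1), where u is a fixed real parameter. Assume |∂g/∂u| ≤ L₃ and 0 < g_min ≤ ∂g/∂v ≤ L₄. Then the derivative p(t) = ∂v_u(t)/∂u satisfies |p(t)| ≤ L₃ e^{L₄}/(1 − e^{−g_min}) + L₃ e^{L₄} for all t. -/
import Mathlib

open Real

lemma endpoint_deriv_nonneg (p : ℝ → ℝ) (d : ℝ) (hd : HasDerivAt p d 1)
    (h : ∀ t ∈ Set.Icc (0:ℝ) 1, p t ≤ p 1) : 0 ≤ d := by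
  have hy : (-1 : ℝ) ∈ posTangentConeAt (Set.Icc (0:ℝ) 1) 1 := by
    have hseg : segment ℝ (1:ℝ) 0 ⊆ Set.Icc (0:ℝ) 1 := by
      rw [segment_symm, segment_eq_Icc (by norm_num : (0:ℝ) ≤ 1)]
    simpa using sub_mem_posTangentConeAt_of_segment_subset hseg
  have hmax : IsLocalMaxOn p (Set.Icc (0:ℝ) 1) 1 := by
    have : IsMaxOn p (Set.Icc (0:ℝ) 1) 1 := h
    exact this.filter_mono (Filter.le_principal_iff.2 self_mem_nhdsWithin)
  have := hmax.hasFDerivWithinAt_nonpos hd.hasFDerivAt.hasFDerivWithinAt hy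
  simpa using this

lemma endpoint_deriv_nonpos (p : ℝ → ℝ) (d : ℝ) (hd : HasDerivAt p d 1)
    (h : ∀ t ∈ Set.Icc (0:ℝ) 1, p 1 ≤ p t) : d ≤ 0 := by
  have := endpoint_deriv_nonneg (fun t => -p t) (-d) hd.neg
    (fun t ht => by simpa using h t ht)
  linarith

/-- Lemma 8: the derivative of the periodic solution with respect to the
parameter is uniformly bounded. -/
theorem stmt5
    (gmin L₃ L₄ u : ℝ) (hgmin : 0 < gmin)
    (g : ℝ → ℝ → ℝ) (gu gv : ℝ → ℝ → ℝ) (f : ℝ → ℝ)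
    (hgu : ∀ a b, HasDerivAt (fun x => g x b) (gu a b) a)
    (hgubd : ∀ a b, |gu a b| ≤ L₃)
    (hgv : ∀ a b, HasDerivAt (fun y => g a y) (gv a b) b)
    (hgvbd : ∀ a b, gmin ≤ gv a b ∧ gv a b ≤ L₄)
    (vu p : ℝ → ℝ)
    (hvu : ∀ t ∈ Set.Icc (0:ℝ) 1, HasDerivAt vu (f t - g u (vu t)) t)
    (hvuper : vu 0 = vu 1)
    (hp : ∀ t ∈ Set.Icc (0:ℝ) 1,
      HasDerivAt p (-(gu u (vu t) + gv u (vu t) * p t)) t)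
    (hpper : p 0 = p 1) :
    ∀ t ∈ Set.Icc (0:ℝ) 1,
      |p t| ≤ L₃ * Real.exp L₄ / (1 - Real.exp (-gmin)) + L₃ * Real.exp L₄ := by
  have hL3 : 0 ≤ L₃ := le_trans (abs_nonneg _) (hgubd 0 0)
  set C := L₃ / gmin with hC
  have hC0 : 0 ≤ C := div_nonneg hL3 hgmin.le
  have hpc : ContinuousOn p (Set.Icc (0:ℝ) 1) :=
    fun t ht => (hp t ht).continuousAt.continuousWithinAt
  have hne : (Set.Icc (0:ℝ) 1).Nonempty := ⟨0, by norm_num⟩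
  have h01 : (0:ℝ) ∈ Set.Icc (0:ℝ) 1 := by norm_num
  have h11 : (1:ℝ) ∈ Set.Icc (0:ℝ) 1 := by norm_num
  -- from a relation gv * M ≤ L₃ with M the value, conclude M ≤ C
  have key : ∀ s : ℝ, ∀ M : ℝ, gv u (vu s) * M ≤ L₃ → M ≤ C := by
    intro s M hrel
    rcases le_or_gt M 0 with hM | hM
    · linarith
    · have hb := (hgvbd u (vu s)).1
      rw [hC, le_div_iff₀ hgmin]
      nlinarith
  have key' : ∀ s : ℝ, ∀ M : ℝ, -L₃ ≤ gv u (vu s) * M → -C ≤ M := by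
    intro s M hrel
    have := key s (-M) (by nlinarith)
    linarith
  -- upper bound
  have hub : ∀ t ∈ Set.Icc (0:ℝ) 1, p t ≤ C := by
    obtain ⟨t₁, ht₁, hmax⟩ := isCompact_Icc.exists_isMaxOn hne hpc
    intro t ht
    have hMle : p t₁ ≤ C := by
      rcases eq_or_ne t₁ 0 with rfl | h0
      · -- max at 0; use endpoint 1 via periodicity
        have hmax1 : ∀ s ∈ Set.Icc (0:ℝ) 1, p s ≤ p 1 := fun s hs => hpper ▸ hmax hs
        have hd := endpoint_deriv_nonneg p _ (hp 1 h11) hmax1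
        have : gv u (vu 1) * p 1 ≤ -gu u (vu 1) := by linarith
        rw [hpper]
        exact key 1 _ (this.trans ((neg_le_abs _).trans (hgubd u (vu 1))))
      · rcases eq_or_ne t₁ 1 with rfl | h1
        · have hmax1 : ∀ s ∈ Set.Icc (0:ℝ) 1, p s ≤ p 1 := fun s hs => hmax hs
          have hd := endpoint_deriv_nonneg p _ (hp 1 h11) hmax1
          have : gv u (vu 1) * p 1 ≤ -gu u (vu 1) := by linarith
          exact key 1 _ (this.trans ((neg_le_abs _).trans (hgubd u (vu 1))))
        · -- interior max
          have hio : t₁ ∈ Set.Ioo (0:ℝ) 1 :=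
            ⟨lt_of_le_of_ne ht₁.1 (Ne.symm h0), lt_of_le_of_ne ht₁.2 h1⟩
          have hloc : IsLocalMax p t₁ :=
            hmax.filter_mono (Filter.le_principal_iff.2 (Icc_mem_nhds hio.1 hio.2))
          have hz := hloc.hasDerivAt_eq_zero (hp t₁ ht₁)
          have : gv u (vu t₁) * p t₁ = -gu u (vu t₁) := by linarith
          exact key t₁ _ (this.le.trans ((neg_le_abs _).trans (hgubd u (vu t₁))))
    exact (hmax ht).trans hMle
  -- lower bound
  have hlb : ∀ t ∈ Set.Icc (0:ℝ) 1, -C ≤ p t := by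
    obtain ⟨t₀, ht₀, hmin⟩ := isCompact_Icc.exists_isMinOn hne hpc
    intro t ht
    have hMle : -C ≤ p t₀ := by
      rcases eq_or_ne t₀ 0 with rfl | h0
      · have hmin1 : ∀ s ∈ Set.Icc (0:ℝ) 1, p 1 ≤ p s := fun s hs => hpper ▸ hmin hs
        have hd := endpoint_deriv_nonpos p _ (hp 1 h11) hmin1
        have : -gu u (vu 1) ≤ gv u (vu 1) * p 1 := by linarith
        rw [hpper]
        refine key' 1 _ (le_trans ?_ this)
        have := (abs_le.1 (hgubd u (vu 1))).2; linarith
      · rcases eq_or_ne t₀ 1 with rfl | h1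
        · have hmin1 : ∀ s ∈ Set.Icc (0:ℝ) 1, p 1 ≤ p s := fun s hs => hmin hs
          have hd := endpoint_deriv_nonpos p _ (hp 1 h11) hmin1
          have : -gu u (vu 1) ≤ gv u (vu 1) * p 1 := by linarith
          refine key' 1 _ (le_trans ?_ this)
          have := (abs_le.1 (hgubd u (vu 1))).2; linarith
        · have hio : t₀ ∈ Set.Ioo (0:ℝ) 1 :=
            ⟨lt_of_le_of_ne ht₀.1 (Ne.symm h0), lt_of_le_of_ne ht₀.2 h1⟩
          have hloc : IsLocalMin p t₀ :=
            hmin.filter_mono (Filter.le_principal_iff.2 (Icc_mem_nhds hio.1 hio.2))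
          have hz := hloc.hasDerivAt_eq_zero (hp t₀ ht₀)
          have heq : -gu u (vu t₀) ≤ gv u (vu t₀) * p t₀ := by linarith
          refine key' t₀ _ (le_trans ?_ heq)
          have := (abs_le.1 (hgubd u (vu t₀))).2; linarith
    exact hMle.trans (hmin ht)
  -- compare C with the stated bound
  have hL4 : gmin ≤ L₄ := le_trans (hgvbd 0 0).1 (hgvbd 0 0).2
  have hexp1 : (1:ℝ) ≤ Real.exp L₄ := by
    rw [Real.one_le_exp_iff]; linarith
  have hdenpos : 0 < 1 - Real.exp (-gmin) := by
    have : Real.exp (-gmin) < 1 := Real.exp_lt_one_iff.2 (by linarith)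
    linarith
  have hdenle : 1 - Real.exp (-gmin) ≤ gmin := by
    have := Real.add_one_le_exp (-gmin); linarith
  have hCle : C ≤ L₃ * Real.exp L₄ / (1 - Real.exp (-gmin)) + L₃ * Real.exp L₄ := by
    have h1 : C ≤ L₃ / (1 - Real.exp (-gmin)) :=
      div_le_div_of_nonneg_left hL3 hdenpos hdenle
    have hnum : L₃ ≤ L₃ * Real.exp L₄ := by nlinarith
    have h2 : L₃ / (1 - Real.exp (-gmin)) ≤ L₃ * Real.exp L₄ / (1 - Real.exp (-gmin)) :=
      (div_le_div_iff_of_pos_right hdenpos).2 hnum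
    nlinarith [mul_nonneg hL3 (le_trans zero_le_one hexp1)]
  intro t ht
  rw [abs_le]
  exact ⟨by linarith [hlb t ht], by linarith [hub t ht]⟩
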